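/- Let P and Q be good rectangular preorders on Coll(m,n), viewed as subsets of Coll(m,n) × Coll(m,n). Then the transitive closure of P ∪ Q is also a good rectangular preorder. -/

import Mathlib

/-- `Coll m n` is the set of collisions: vertical collisions `mᵢ` for `1 ≤ i < m`
(encoded `Sum.inl`) and horizontal collisions `lⱼ` for `1 ≤ j < n` (encoded `Sum.inr`). -/
abbrev Coll (m n : ℕ) := Fin (m - 1) ⊕ Fin (n - 1)

/-- A vertical and a horizontal collision are orthogonal. -/
def Orthogonal {m n : ℕ} : Coll m n → Coll m n → Prop
  | Sum.inl _, Sum.inr _ => True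
  | Sum.inr _, Sum.inl _ => True
  | _, _ => False

/-- Two distinct collisions of the same kind are parallel. -/
def Parallel {m n : ℕ} : Coll m n → Coll m n → Prop
  | Sum.inl i, Sum.inl j => i ≠ j
  | Sum.inr i, Sum.inr j => i ≠ j
  | _, _ => False

/-- `Between x y g`: `g` is a collision parallel to `x` and `y` whose index lies in the
interval spanned by the indices of `x` and `y`. -/
def Between {m n : ℕ} : Coll m n → Coll m n → Coll m n → Prop
  | Sum.inl i, Sum.inl j, Sum.inl s => min i j ≤ s ∧ s ≤ max i j
  | Sum.inr i, Sum.inr j, Sum.inr s => min i j ≤ s ∧ s ≤ max i j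
  | _, _, _ => False

/-- Strict comparison in a preorder `R`. -/
def StrictR {m n : ℕ} (R : Coll m n → Coll m n → Prop) (x y : Coll m n) : Prop :=
  R x y ∧ ¬ R y x

/-- `z` is an orthogonal link between the parallel collisions `x` and `y`:
`z` is orthogonal to them and `x ≤ z ≤ y` or `y ≤ z ≤ x`. -/
def IsLink {m n : ℕ} (R : Coll m n → Coll m n → Prop) (x y z : Coll m n) : Prop :=
  Orthogonal x z ∧ ((R x z ∧ R z y) ∨ (R y z ∧ R z x))

/-- `g` is a gap between the parallel collisions `x` and `y`: its index is between theirs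
and `x < g > y` strictly. -/
def IsGap {m n : ℕ} (R : Coll m n → Coll m n → Prop) (x y g : Coll m n) : Prop :=
  Between x y g ∧ StrictR R x g ∧ StrictR R y g

/-- A good rectangular preorder on `Coll m n`: a reflexive transitive relation such that
orthogonal collisions are always comparable, and parallel collisions are comparable iff
there is an orthogonal link between them or there is no gap between them. -/
structure IsGoodRect {m n : ℕ} (R : Coll m n → Coll m n → Prop) : Prop where
  refl : ∀ x, R x x
  trans : ∀ x y z, R x y → R y z → R x z
  orth : ∀ x y, Orthogonal x y → R x y ∨ R y x
  par : ∀ x y, Parallel x y →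
    ((R x y ∨ R y x) ↔ ((∃ z, IsLink R x y z) ∨ ¬ ∃ g, IsGap R x y g))

/-- `P` refines `Q`: every comparison of `P` holds in `Q`. -/
def Refines {m n : ℕ} (P Q : Coll m n → Coll m n → Prop) : Prop :=
  ∀ x y, P x y → Q x y

/-- A vertex preorder: a good rectangular preorder in which equivalence implies equality. -/
def IsVertexP {m n : ℕ} (R : Coll m n → Coll m n → Prop) : Prop :=
  IsGoodRect R ∧ ∀ x y, R x y → R y x → x = y

/-- An edge preorder: a good rectangular preorder with exactly one equivalence class of
size two (the pair `{a,b}`), all other classes being singletons. -/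
def IsEdgeP {m n : ℕ} (R : Coll m n → Coll m n → Prop) : Prop :=
  IsGoodRect R ∧ ∃ a b : Coll m n, a ≠ b ∧ R a b ∧ R b a ∧
    ∀ x y : Coll m n, x ≠ y → R x y → R y x → (x = a ∧ y = b) ∨ (x = b ∧ y = a)

-- ===== auxiliary order lemmas =====


private lemma btwo_trans {α : Type*} [LinearOrder α] {a b u h : α}
    (h1 : min a b ≤ u) (h2 : u ≤ max a b) (h3 : min a u ≤ h) (h4 : h ≤ max a u) :
    min a b ≤ h ∧ h ≤ max a b :=
  ⟨le_trans (le_min (min_le_left a b) h1) h3,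
   le_trans h4 (max_le (le_max_left a b) h2)⟩

private lemma btwo_ivt {α : Type*} [LinearOrder α] {c y d g : α}
    (h1 : min c y ≤ g) (h2 : g ≤ max c y) (h3 : ¬ (min d y ≤ g ∧ g ≤ max d y)) :
    min c d ≤ g ∧ g ≤ max c d := by
  rcases not_and_or.mp h3 with h | h
  · have h5 := not_le.mp h
    have hgd : g < d := lt_of_lt_of_le h5 (min_le_left d y)
    have hgy : g < y := lt_of_lt_of_le h5 (min_le_right d y)
    have hcg : c ≤ g := by
      rcases min_le_iff.mp h1 with h' | h'
      · exact h'
      · exact absurd h' (not_le.mpr hgy)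
    exact ⟨le_trans (min_le_left c d) hcg, le_trans hgd.le (le_max_right c d)⟩
  · have h5 := not_le.mp h
    have hdg : d < g := lt_of_le_of_lt (le_max_left d y) h5
    have hyg : y < g := lt_of_le_of_lt (le_max_right d y) h5
    have hgc : g ≤ c := by
      rcases le_max_iff.mp h2 with h' | h'
      · exact h'
      · exact absurd h' (not_le.mpr hyg)
    exact ⟨le_trans (min_le_right c d) hdg.le, le_trans hgc (le_max_left c d)⟩

-- ===== Coll-level combinatorial lemmas =====

section CollLemmas
variable {m n : ℕ}

private lemma par_symm {x y : Coll m n} (h : Parallel x y) : Parallel y x := by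
  rcases x with i | i <;> rcases y with j | j <;>
    first
      | exact h.elim
      | exact fun e => h e.symm

private lemma par_not_orth {x y : Coll m n} (h : Parallel x y) : ¬ Orthogonal x y := by
  rcases x with i | i <;> rcases y with j | j <;>
    first
      | exact h.elim
      | exact fun h' => h'

private lemma not_orth_symm {x y : Coll m n} (h : ¬ Orthogonal x y) : ¬ Orthogonal y x := by
  rcases x with i | i <;> rcases y with j | j <;>
    first
      | exact fun h' => h'
      | exact fun _ => h trivial

private lemma not_orth_trans {x a b : Coll m n}
    (h1 : ¬ Orthogonal x a) (h2 : ¬ Orthogonal x b) : ¬ Orthogonal a b := by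
  rcases x with i | i <;> rcases a with j | j <;> rcases b with k | k <;>
    first
      | exact fun h' => h'
      | exact fun _ => h1 trivial
      | exact fun _ => h2 trivial

private lemma orth_transfer {x c z : Coll m n}
    (h1 : ¬ Orthogonal x c) (h2 : Orthogonal c z) : Orthogonal x z := by
  rcases x with i | i <;> rcases c with j | j <;> rcases z with k | k <;>
    first
      | trivial
      | exact h2.elim
      | exact (h1 trivial).elim

private lemma btw_not_orth₁ {a b u : Coll m n} (h : Between a b u) : ¬ Orthogonal a u := by
  rcases a with i | i <;> rcases b with j | j <;> rcases u with s | s <;>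
    first
      | exact h.elim
      | exact fun h' => h'

private lemma btw_not_orth₂ {a b u : Coll m n} (h : Between a b u) : ¬ Orthogonal b u := by
  rcases a with i | i <;> rcases b with j | j <;> rcases u with s | s <;>
    first
      | exact h.elim
      | exact fun h' => h'

private lemma btw_not_orth₃ {a b u : Coll m n} (h : Between a b u) : ¬ Orthogonal a b := by
  rcases a with i | i <;> rcases b with j | j <;> rcases u with s | s <;>
    first
      | exact h.elim
      | exact fun h' => h'

private lemma ne_par {a b : Coll m n} (h1 : ¬ Orthogonal a b) (h2 : a ≠ b) : Parallel a b := by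
  rcases a with i | i <;> rcases b with j | j <;>
    first
      | exact (h1 trivial).elim
      | exact fun e => h2 (e ▸ rfl)

private lemma btw_self {a u : Coll m n} (h : Between a a u) : u = a := by
  rcases a with i | i <;> rcases u with s | s <;>
    first
      | exact h.elim
      | exact congrArg Sum.inl (le_antisymm (by simpa using h.2) (by simpa using h.1))
      | exact congrArg Sum.inr (le_antisymm (by simpa using h.2) (by simpa using h.1))

private lemma btw_symm {a b u : Coll m n} (h : Between a b u) : Between b a u := by
  rcases a with i | i <;> rcases b with j | j <;> rcases u with s | s <;>
    first
      | exact h.elim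
      | exact ⟨by rw [min_comm]; exact h.1, by rw [max_comm]; exact h.2⟩

private lemma btw_trans {a b u h : Coll m n}
    (h1 : Between a b u) (h2 : Between a u h) : Between a b h := by
  rcases a with i | i <;> rcases b with j | j <;> rcases u with s | s <;> rcases h with t | t <;>
    first
      | exact h1.elim
      | exact h2.elim
      | exact btwo_trans h1.1 h1.2 h2.1 h2.2

private lemma btw_trans' {a b u h : Coll m n}
    (h1 : Between a b u) (h2 : Between b u h) : Between a b h :=
  btw_symm (btw_trans (btw_symm h1) h2)

private lemma btw_ivt {c y d g : Coll m n}
    (h1 : Between c y g) (h2 : ¬ Between d y g) (h3 : ¬ Orthogonal d g) :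
    Between c d g := by
  rcases c with i | i <;> rcases y with j | j <;> rcases d with k | k <;> rcases g with s | s <;>
    first
      | exact h1.elim
      | exact (h3 trivial).elim
      | exact btwo_ivt h1.1 h1.2 h2

end CollLemmas

-- ===== key descent lemma =====

private lemma descend {m n : ℕ} {T : Coll m n → Coll m n → Prop} (hT : IsGoodRect T)
    {a b : Coll m n} (hab : T a b) (hng : ¬ ∃ g, IsGap T a b g) :
    ∀ u, Between a b u → ¬ T u a → ¬ T u b → False := by
  classical
  suffices H : ∀ k (u : Coll m n),
      (Finset.univ.filter (fun w => T u w ∧ ¬ T w u)).card ≤ k →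
      Between a b u → ¬ T u a → ¬ T u b → False by
    intro u h1 h2 h3
    exact H _ u le_rfl h1 h2 h3
  intro k
  induction k using Nat.strong_induction_on with
  | _ k ih =>
    intro u hcard hbtw hua hub
    have hune_a : u ≠ a := fun h => hua (h ▸ hT.refl u)
    have hune_b : u ≠ b := fun h => hub (h ▸ hT.refl u)
    have hnot : ¬ (T a u ∧ T b u) := fun ⟨h1, h2⟩ => hng ⟨u, hbtw, ⟨h1, hua⟩, ⟨h2, hub⟩⟩
    obtain ⟨h, hTuh, hhu, hbtw', hha, hhb⟩ :
        ∃ h, T u h ∧ ¬ T h u ∧ Between a b h ∧ ¬ T h a ∧ ¬ T h b := by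
      by_cases hau : T a u
      · have hbu : ¬ T b u := fun h2 => hnot ⟨hau, h2⟩
        have hparbu : Parallel b u := ne_par (btw_not_orth₂ hbtw) (Ne.symm hune_b)
        have hnc : ¬ (T b u ∨ T u b) := by rintro (h | h) <;> [exact hbu h; exact hub h]
        have hrhs : ¬ ((∃ z, IsLink T b u z) ∨ ¬ ∃ g, IsGap T b u g) :=
          fun hh => hnc ((hT.par b u hparbu).mpr hh)
        rw [not_or, not_not] at hrhs
        obtain ⟨g', hbw, ⟨hbg, hgb⟩, ⟨hug, hgu⟩⟩ := hrhs.2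
        refine ⟨g', hug, hgu, btw_trans' hbtw hbw, ?_, hgb⟩
        exact fun h' => hua (hT.trans u g' a hug h')
      · have hparau : Parallel a u := ne_par (btw_not_orth₁ hbtw) (Ne.symm hune_a)
        have hnc : ¬ (T a u ∨ T u a) := by rintro (h | h) <;> [exact hau h; exact hua h]
        have hrhs : ¬ ((∃ z, IsLink T a u z) ∨ ¬ ∃ g, IsGap T a u g) :=
          fun hh => hnc ((hT.par a u hparau).mpr hh)
        rw [not_or, not_not] at hrhs
        obtain ⟨g', hbw, ⟨hag, hga⟩, ⟨hug, hgu⟩⟩ := hrhs.2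
        refine ⟨g', hug, hgu, btw_trans hbtw hbw, hga, ?_⟩
        exact fun h' => hub (hT.trans u g' b hug h')
    have hss : (Finset.univ.filter (fun w => T h w ∧ ¬ T w h)) ⊂
        (Finset.univ.filter (fun w => T u w ∧ ¬ T w u)) := by
      rw [Finset.ssubset_def]
      constructor
      · intro w hw
        simp only [Finset.mem_filter, Finset.mem_univ, true_and] at hw ⊢
        exact ⟨hT.trans u h w hTuh hw.1, fun h' => hw.2 (hT.trans w u h h' hTuh)⟩
      · intro hsup
        have : h ∈ Finset.univ.filter (fun w => T u w ∧ ¬ T w u) := by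
          simp only [Finset.mem_filter, Finset.mem_univ, true_and]
          exact ⟨hTuh, hhu⟩
        have := hsup this
        simp only [Finset.mem_filter, Finset.mem_univ, true_and] at this
        exact this.2 (hT.refl h)
    exact ih _ (lt_of_lt_of_le (Finset.card_lt_card hss) hcard) h le_rfl hbtw' hha hhb

-- ===== one step of the chain =====

private lemma step_false {m n : ℕ} {T R' : Coll m n → Coll m n → Prop} (hT : IsGoodRect T)
    (hsub : ∀ a b, T a b → R' a b)
    (htr : ∀ a b c, R' a b → R' b c → R' a c)
    {x y c d g : Coll m n}
    (hxc : R' x c) (hcy : R' c y) (hdy : R' d y)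
    (hcd : T c d)
    (hnl : ¬ ∃ z, IsLink R' x y z)
    (hnox : ¬ Orthogonal x c)
    (hgy : ¬ R' g y)
    (hbcd : Between c d g) : False := by
  have hxd : R' x d := htr _ _ _ hxc (hsub _ _ hcd)
  have hgc : ¬ T g c := fun h => hgy (htr _ _ _ (hsub _ _ h) hcy)
  have hgd : ¬ T g d := fun h => hgy (htr _ _ _ (hsub _ _ h) hdy)
  -- c ≠ d
  have hcnd : c ≠ d := by
    intro h
    subst h
    exact hgc ((btw_self hbcd) ▸ hT.refl c)
  have hpcd : Parallel c d := ne_par (btw_not_orth₃ hbcd) hcnd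
  -- no T-link between c and d
  have hnlcd : ¬ ∃ z, IsLink T c d z := by
    rintro ⟨z, hoz, (⟨h1, h2⟩ | ⟨h1, h2⟩)⟩
    · exact hnl ⟨z, orth_transfer hnox hoz,
        Or.inl ⟨htr _ _ _ hxc (hsub _ _ h1), htr _ _ _ (hsub _ _ h2) hdy⟩⟩
    · exact hnl ⟨z, orth_transfer hnox hoz,
        Or.inl ⟨htr _ _ _ hxd (hsub _ _ h1), htr _ _ _ (hsub _ _ h2) hcy⟩⟩
  have hng : ¬ ∃ gg, IsGap T c d gg := by
    rcases (hT.par c d hpcd).mp (Or.inl hcd) with hl | hng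
    · exact absurd hl hnlcd
    · exact hng
  exact descend hT hcd hng g hbcd hgc hgd

-- ===== main lemma: a comparable pair with no link has no gap =====

private lemma main_lemma {m n : ℕ} {P Q : Coll m n → Coll m n → Prop}
    (hP : IsGoodRect P) (hQ : IsGoodRect Q)
    {x y : Coll m n} (hpar : Parallel x y)
    (hxy : Relation.TransGen (fun a b => P a b ∨ Q a b) x y)
    (hnl : ¬ ∃ z, IsLink (Relation.TransGen fun a b => P a b ∨ Q a b) x y z)
    {g : Coll m n}
    (hg : IsGap (Relation.TransGen fun a b => P a b ∨ Q a b) x y g) : False := by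
  set R := Relation.TransGen (fun a b : Coll m n => P a b ∨ Q a b) with hR
  obtain ⟨hbtw, ⟨hxg, hgx⟩, ⟨hyg, hgy⟩⟩ := hg
  have hRrefl : ∀ a : Coll m n, R a a := fun a => Relation.TransGen.single (Or.inl (hP.refl a))
  have htr : ∀ a b c : Coll m n, R a b → R b c → R a c := fun _ _ _ h h' => h.trans h'
  have hsubP : ∀ a b : Coll m n, P a b → R a b := fun _ _ h => Relation.TransGen.single (Or.inl h)
  have hsubQ : ∀ a b : Coll m n, Q a b → R a b := fun _ _ h => Relation.TransGen.single (Or.inr h)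
  have hnoxy : ¬ Orthogonal x y := par_not_orth hpar
  have hnoxg : ¬ Orthogonal x g := btw_not_orth₁ hbtw
  have claim : ∀ c, Relation.TransGen (fun a b => P a b ∨ Q a b) c y →
      R x c → Between c y g → False := by
    intro c hc
    induction hc using Relation.TransGen.head_induction_on with
    | single hstep =>
      rename_i c
      intro hxc hbcg
      have hnoxc : ¬ Orthogonal x c :=
        not_orth_trans (not_orth_symm hnoxg) (not_orth_symm (btw_not_orth₁ hbcg))
      rcases hstep with h | h
      · exact step_false hP hsubP htr hxc (hsubP _ _ h) (hRrefl y) h hnl hnoxc hgy hbcg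
      · exact step_false hQ hsubQ htr hxc (hsubQ _ _ h) (hRrefl y) h hnl hnoxc hgy hbcg
    | head hstep htail IH =>
      rename_i c d
      intro hxc hbcg
      have hcy : R c y := Relation.TransGen.head hstep htail
      have hnoxc : ¬ Orthogonal x c :=
        not_orth_trans (not_orth_symm hnoxg) (not_orth_symm (btw_not_orth₁ hbcg))
      have hxd : R x d := htr _ _ _ hxc (Relation.TransGen.single hstep)
      by_cases hod : Orthogonal x d
      · exact hnl ⟨d, hod, Or.inl ⟨hxd, htail⟩⟩
      · by_cases hbdg : Between d y g
        · exact IH hxd hbdg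
        · have hnodg : ¬ Orthogonal d g := not_orth_trans hod hnoxg
          have hbcd : Between c d g := btw_ivt hbcg hbdg hnodg
          rcases hstep with h | h
          · exact step_false hP hsubP htr hxc hcy htail h hnl hnoxc hgy hbcd
          · exact step_false hQ hsubQ htr hxc hcy htail h hnl hnoxc hgy hbcd
  exact claim x hxy (hRrefl x) hbtw


/-- The transitive closure of the union of two good rectangular preorders is again a good
rectangular preorder. -/
theorem transClosure_union_isGoodRect {m n : ℕ}
    (P Q : Coll m n → Coll m n → Prop)
    (hP : IsGoodRect P) (hQ : IsGoodRect Q) :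
    IsGoodRect (Relation.TransGen fun x y => P x y ∨ Q x y) := by

  classical
  set R := Relation.TransGen (fun a b : Coll m n => P a b ∨ Q a b) with hRdef
  have hRrefl : ∀ a : Coll m n, R a a := fun a => Relation.TransGen.single (Or.inl (hP.refl a))
  refine ⟨hRrefl, fun a b c h h' => h.trans h', ?_, ?_⟩
  · intro a b hab
    rcases hP.orth a b hab with h | h
    · exact Or.inl (Relation.TransGen.single (Or.inl h))
    · exact Or.inr (Relation.TransGen.single (Or.inl h))
  · intro x y hpar
    constructor
    · -- comparable → link or no gap
      intro hcomp
      by_cases hlink : ∃ z, IsLink R x y z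
      · exact Or.inl hlink
      · refine Or.inr ?_
        rintro ⟨g, hg⟩
        rcases hcomp with hxy | hyx
        · exact main_lemma hP hQ hpar hxy hlink hg
        · -- symmetric case
          have hpar' : Parallel y x := par_symm hpar
          have hnoxy : ¬ Orthogonal x y := par_not_orth hpar
          have hnl' : ¬ ∃ z, IsLink R y x z := by
            rintro ⟨z, hoz, hd⟩
            refine hlink ⟨z, ?_, ?_⟩
            · exact orth_transfer hnoxy hoz
            · rcases hd with h | h
              · exact Or.inr h
              · exact Or.inl h
          have hg' : IsGap R y x g := ⟨btw_symm hg.1, hg.2.2, hg.2.1⟩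
          exact main_lemma hP hQ hpar' hyx hnl' hg'
    · -- link or no gap → comparable
      rintro (⟨z, hoz, hd⟩ | hng)
      · rcases hd with ⟨h1, h2⟩ | ⟨h1, h2⟩
        · exact Or.inl (h1.trans h2)
        · exact Or.inr (h1.trans h2)
      · by_cases hPc : P x y ∨ P y x
        · rcases hPc with h | h
          · exact Or.inl (Relation.TransGen.single (Or.inl h))
          · exact Or.inr (Relation.TransGen.single (Or.inl h))
        · have hrhs : ¬ ((∃ z, IsLink P x y z) ∨ ¬ ∃ g, IsGap P x y g) :=
            fun hh => hPc ((hP.par x y hpar).mpr hh)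
          rw [not_or, not_not] at hrhs
          obtain ⟨g, hbtw, ⟨hpxg, hpgx⟩, ⟨hpyg, hpgy⟩⟩ := hrhs.2
          have hRxg : R x g := Relation.TransGen.single (Or.inl hpxg)
          have hRyg : R y g := Relation.TransGen.single (Or.inl hpyg)
          by_cases hgx : R g x
          · exact Or.inr (hRyg.trans hgx)
          · by_cases hgy : R g y
            · exact Or.inl (hRxg.trans hgy)
            · exact absurd ⟨g, hbtw, ⟨hRxg, hgx⟩, ⟨hRyg, hgy⟩⟩ hng
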